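/- The complete bipartite graph K_{3,3} does not admit a 1-queue layout: for every linear order of the six vertices of K_{3,3}, there exist two independent edges that nest. -/

import Mathlib

private def eB (a b : ℕ) : Bool := (a < 3 && 3 ≤ b) || (b < 3 && 3 ≤ a)

private def nestCheck (l : List ℕ) : Bool :=
  (List.range 6).any fun p1 =>
  (List.range 6).any fun p2 =>
  (List.range 6).any fun p3 =>
  (List.range 6).any fun p4 =>
    (decide (p1 < p2) && decide (p2 < p3) && decide (p3 < p4)) &&
    eB (l.getD p1 9) (l.getD p4 9) && eB (l.getD p2 9) (l.getD p3 9)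

set_option maxRecDepth 100000 in
private lemma allPerm : ∀ l ∈ (List.range 6).permutations', nestCheck l = true := by decide

private instance : DecidableRel (completeBipartiteGraph (Fin 3) (Fin 3)).Adj :=
  fun v w => by unfold completeBipartiteGraph; infer_instance

private lemma adjOf : ∀ u v : Fin 6,
    ((u : ℕ) < 3 ∧ 3 ≤ (v : ℕ) ∨ (v : ℕ) < 3 ∧ 3 ≤ (u : ℕ)) →
    (completeBipartiteGraph (Fin 3) (Fin 3)).Adj (finSumFinEquiv.symm u) (finSumFinEquiv.symm v) := by
  decide

theorem K33_no_one_queue_layout (f : Fin 3 ⊕ Fin 3 → ℕ)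
    (hf : Function.Injective f) :
    ∃ u v w x : Fin 3 ⊕ Fin 3,
      (completeBipartiteGraph (Fin 3) (Fin 3)).Adj u v ∧
      (completeBipartiteGraph (Fin 3) (Fin 3)).Adj w x ∧
      f u < f w ∧ f w < f x ∧ f x < f v := by
  classical
  set s : Finset ℕ := Finset.image f Finset.univ with hs
  have hcard : s.card = 6 := by
    rw [hs, Finset.card_image_of_injective _ hf]; simp
  let iso := s.orderIsoOfFin hcard
  have hmem : ∀ v, f v ∈ s := fun v => Finset.mem_image_of_mem f (Finset.mem_univ v)
  let g : Fin 3 ⊕ Fin 3 → Fin 6 := fun v => iso.symm ⟨f v, hmem v⟩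
  have hgf : ∀ u v, g u < g v ↔ f u < f v := by
    intro u v
    rw [← iso.lt_iff_lt]
    simp [g]
  have hginj : Function.Injective g := by
    intro u v h
    apply hf
    have := congrArg iso h
    simpa [g] using congrArg Subtype.val this
  have hgbij : Function.Bijective g :=
    (Fintype.bijective_iff_injective_and_card g).mpr ⟨hginj, by simp⟩
  let σ : Equiv.Perm (Fin 6) := finSumFinEquiv.symm.trans (Equiv.ofBijective g hgbij)
  -- the list of vertex labels in order of positions
  let l : List ℕ := (List.finRange 6).map fun p => ((σ.symm p : Fin 6) : ℕ)
  have hlen : l.length = 6 := by simp [l]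
  have hgetD : ∀ (p : ℕ) (hp : p < 6), l.getD p 9 = ((σ.symm ⟨p, hp⟩ : Fin 6) : ℕ) := by
    intro p hp
    rw [List.getD_eq_getElem _ _ (by omega)]
    simp [l]
  have hnodup : l.Nodup := by
    refine List.Nodup.map ?_ (List.nodup_finRange 6)
    exact fun a b hab => σ.symm.injective (Fin.val_injective hab)
  have hperm : List.Perm l (List.range 6) := by
    refine List.perm_of_nodup_nodup_toFinset_eq hnodup List.nodup_range ?_
    ext a
    simp only [List.mem_toFinset, List.mem_map, List.mem_finRange, List.mem_range, l,
      true_and]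
    constructor
    · rintro ⟨p, rfl⟩; exact (σ.symm p).isLt
    · intro ha; exact ⟨σ ⟨a, ha⟩, by simp⟩
  have hnest := allPerm l (List.mem_permutations'.2 hperm)
  simp only [nestCheck, eB, List.any_eq_true, List.mem_range, Bool.and_eq_true,
    Bool.or_eq_true, decide_eq_true_eq] at hnest
  obtain ⟨p1, hp1, p2, hp2, p3, hp3, p4, hp4, ⟨⟨⟨h12, h23⟩, h34⟩, he1⟩, he2⟩ := hnest
  rw [hgetD p1 hp1, hgetD p4 hp4] at he1
  rw [hgetD p2 hp2, hgetD p3 hp3] at he2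
  refine ⟨finSumFinEquiv.symm (σ.symm ⟨p1, hp1⟩), finSumFinEquiv.symm (σ.symm ⟨p4, hp4⟩),
    finSumFinEquiv.symm (σ.symm ⟨p2, hp2⟩), finSumFinEquiv.symm (σ.symm ⟨p3, hp3⟩),
    adjOf _ _ he1, adjOf _ _ he2, ?_, ?_, ?_⟩
  · refine (hgf _ _).mp ?_
    have e1 : g (finSumFinEquiv.symm (σ.symm ⟨p1, hp1⟩)) = ⟨p1, hp1⟩ := σ.apply_symm_apply _
    have e2 : g (finSumFinEquiv.symm (σ.symm ⟨p2, hp2⟩)) = ⟨p2, hp2⟩ := σ.apply_symm_apply _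
    rw [e1, e2]; exact h12
  · refine (hgf _ _).mp ?_
    have e1 : g (finSumFinEquiv.symm (σ.symm ⟨p2, hp2⟩)) = ⟨p2, hp2⟩ := σ.apply_symm_apply _
    have e2 : g (finSumFinEquiv.symm (σ.symm ⟨p3, hp3⟩)) = ⟨p3, hp3⟩ := σ.apply_symm_apply _
    rw [e1, e2]; exact h23
  · refine (hgf _ _).mp ?_
    have e1 : g (finSumFinEquiv.symm (σ.symm ⟨p3, hp3⟩)) = ⟨p3, hp3⟩ := σ.apply_symm_apply _
    have e2 : g (finSumFinEquiv.symm (σ.symm ⟨p4, hp4⟩)) = ⟨p4, hp4⟩ := σ.apply_symm_apply _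
    rw [e1, e2]; exact h34
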